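/- (Computation in the proof of Lemma 18.) Let x, y be real numbers with 0 < x < y, and let C = {z ∈ ℍ : |z − (x+y)/2| = (y−x)/2} be the semicircular geodesic of ℍ with endpoints x and y. Then the infimum of the hyperbolic distances dist(p, q) over p in the imaginary-axis geodesic I and q ∈ C equals arcosh((y + x)/(y − x)). -/

import Mathlib

open scoped UpperHalfPlane

/-- The inverse hyperbolic cosine. -/
noncomputable def arcosh (x : ℝ) : ℝ := Real.log (x + Real.sqrt (x ^ 2 - 1))

lemma arcosh_cosh {b : ℝ} (hb : 0 ≤ b) : arcosh (Real.cosh b) = b := by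
  have h1 : Real.cosh b ^ 2 - 1 = Real.sinh b ^ 2 := by
    rw [Real.cosh_sq']; ring
  have h2 : Real.sqrt (Real.cosh b ^ 2 - 1) = Real.sinh b := by
    rw [h1, Real.sqrt_sq (Real.sinh_nonneg_iff.2 hb)]
  rw [arcosh, h2, Real.cosh_add_sinh, Real.log_exp]

lemma arcosh_le {a b : ℝ} (ha : 1 ≤ a) (hb : 0 ≤ b) (h : a ≤ Real.cosh b) :
    arcosh a ≤ b := by
  rw [← arcosh_cosh hb]
  have h1 : (0:ℝ) < a + Real.sqrt (a ^ 2 - 1) := by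
    have := Real.sqrt_nonneg (a ^ 2 - 1); linarith
  have hcb : 1 ≤ Real.cosh b := Real.one_le_cosh b
  apply Real.log_le_log h1
  gcongr

/-- Computation in the proof of Lemma 18: for `0 < x < y`, the distance between the
imaginary-axis geodesic and the semicircular geodesic with endpoints `x` and `y`
equals `arcosh ((y + x)/(y - x))`. -/
theorem dist_imaginary_axis_to_semicircle (x y : ℝ) (hx : 0 < x) (hxy : x < y) :
    sInf (Set.image2 dist {z : ℍ | z.re = 0}
        {z : ℍ | ‖(z : ℂ) - (((x + y) / 2 : ℝ) : ℂ)‖ = (y - x) / 2}) =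
      arcosh ((y + x) / (y - x)) := by
  have hyx : (0:ℝ) < y - x := by linarith
  have hy : (0:ℝ) < y := lt_trans hx hxy
  have hxy0 : (0:ℝ) < x * y := mul_pos hx hy
  have hs : 0 < Real.sqrt (x * y) := Real.sqrt_pos.2 hxy0
  have hs2 : Real.sqrt (x * y) ^ 2 = x * y := Real.sq_sqrt hxy0.le
  set s := Real.sqrt (x * y) with hs_def
  have hc : (0:ℝ) < (x + y) / 2 := by linarith
  have ha : 1 ≤ (y + x) / (y - x) := by
    rw [le_div_iff₀ hyx]; linarith
  -- lower bound
  have hlb : ∀ d ∈ Set.image2 dist {z : ℍ | z.re = 0}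
      {z : ℍ | ‖(z : ℂ) - (((x + y) / 2 : ℝ) : ℂ)‖ = (y - x) / 2},
      arcosh ((y + x) / (y - x)) ≤ d := by
    rintro d ⟨p, hp, q, hq, rfl⟩
    refine arcosh_le ha dist_nonneg ?_
    rw [UpperHalfPlane.cosh_dist]
    have hp0 : (p : ℂ).re = 0 := hp
    have ht : 0 < (p : ℂ).im := p.2
    have hv : 0 < (q : ℂ).im := q.2
    have hq' : ((q : ℂ).re - (x + y) / 2) ^ 2 + (q : ℂ).im ^ 2 = ((y - x) / 2) ^ 2 := by
      have h2 := congrArg (· ^ 2) hq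
      rw [Complex.sq_norm, Complex.normSq_apply] at h2
      simp only [Complex.sub_re, Complex.sub_im, Complex.ofReal_re, Complex.ofReal_im,
        sub_zero] at h2
      rw [← h2]; ring
    have hd2 : dist (p : ℂ) (q : ℂ) ^ 2 =
        ((p : ℂ).re - (q : ℂ).re) ^ 2 + ((p : ℂ).im - (q : ℂ).im) ^ 2 := by
      rw [Complex.dist_eq, Complex.sq_norm, Complex.normSq_apply]
      simp only [Complex.sub_re, Complex.sub_im]; ring
    rw [hd2, hp0]
    simp only [UpperHalfPlane.coe_im, UpperHalfPlane.coe_re] at *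
    set t := p.im
    set u := q.re
    set v := q.im
    rw [show (1:ℝ) + ((0 - u) ^ 2 + (t - v) ^ 2) / (2 * t * v)
        = (2 * t * v + ((0 - u) ^ 2 + (t - v) ^ 2)) / (2 * t * v) by
      field_simp]
    rw [div_le_div_iff₀ hyx (by positivity)]
    nlinarith [sq_nonneg ((y - x) * t - (x + y) * v), sq_nonneg ((x + y) * u - 2 * x * y),
      mul_pos ht hv, sq_nonneg (t - v), sq_nonneg u, hq', mul_pos hx hxy0]
  -- the minimizing pair
  have hr : (0:ℝ) < (y - x) / 2 := by linarith
  have hq_im : (0:ℝ) < (y - x) / 2 * s / ((x + y) / 2) := by positivity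
  set p : ℍ := ⟨(s : ℂ) * Complex.I, by simpa using hs⟩ with hp_def
  set q : ℍ := ⟨((x * y / ((x + y) / 2) : ℝ) : ℂ) +
      (((y - x) / 2 * s / ((x + y) / 2) : ℝ) : ℂ) * Complex.I, by simp only [Complex.add_re, Complex.add_im, Complex.mul_re, Complex.mul_im, Complex.ofReal_re, Complex.ofReal_im, Complex.I_re, Complex.I_im, mul_zero, mul_one, zero_mul, add_zero, zero_add, sub_zero, zero_sub, zero_add]; exact hq_im⟩ with hq_def
  have hpre : (p : ℂ).re = 0 := by
    show ((s : ℂ) * Complex.I).re = 0; simp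
  have hpim : (p : ℂ).im = s := by
    show ((s : ℂ) * Complex.I).im = s; simp
  have hqre : (q : ℂ).re = x * y / ((x + y) / 2) := by
    show (((x * y / ((x + y) / 2) : ℝ) : ℂ) +
      (((y - x) / 2 * s / ((x + y) / 2) : ℝ) : ℂ) * Complex.I).re = _
    simp only [Complex.add_re, Complex.add_im, Complex.mul_re, Complex.mul_im, Complex.ofReal_re, Complex.ofReal_im, Complex.I_re, Complex.I_im, mul_zero, mul_one, zero_mul, add_zero, zero_add, sub_zero, zero_sub, zero_add]
  have hqim : (q : ℂ).im = (y - x) / 2 * s / ((x + y) / 2) := by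
    show (((x * y / ((x + y) / 2) : ℝ) : ℂ) +
      (((y - x) / 2 * s / ((x + y) / 2) : ℝ) : ℂ) * Complex.I).im = _
    simp only [Complex.add_re, Complex.add_im, Complex.mul_re, Complex.mul_im, Complex.ofReal_re, Complex.ofReal_im, Complex.I_re, Complex.I_im, mul_zero, mul_one, zero_mul, add_zero, zero_add, sub_zero, zero_sub, zero_add]
  have hpA : p ∈ {z : ℍ | z.re = 0} := hpre
  have hqB : q ∈ {z : ℍ | ‖(z : ℂ) - (((x + y) / 2 : ℝ) : ℂ)‖ = (y - x) / 2} := by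
    show ‖(q : ℂ) - (((x + y) / 2 : ℝ) : ℂ)‖ = (y - x) / 2
    rw [Complex.norm_def, Complex.normSq_apply]
    simp only [Complex.sub_re, Complex.sub_im, Complex.ofReal_re, Complex.ofReal_im,
      hqre, hqim, sub_zero]
    rw [show (x * y / ((x + y) / 2) - (x + y) / 2) * (x * y / ((x + y) / 2) - (x + y) / 2) +
        (y - x) / 2 * s / ((x + y) / 2) * ((y - x) / 2 * s / ((x + y) / 2))
        = ((y - x) / 2) ^ 2 by
      have hcne : (x + y) / 2 ≠ 0 := ne_of_gt hc
      field_simp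
      linear_combination (4 * (x - y) ^ 2) * hs2]
    exact Real.sqrt_sq hr.le
  have hd : dist p q = arcosh ((y + x) / (y - x)) := by
    have hcosh : Real.cosh (dist p q) = (y + x) / (y - x) := by
      rw [UpperHalfPlane.cosh_dist, Complex.dist_eq, Complex.sq_norm, Complex.normSq_apply]
      simp only [Complex.sub_re, Complex.sub_im]
      rw [show p.im = (p : ℂ).im from rfl, show q.im = (q : ℂ).im from rfl]
      rw [hpre, hpim, hqre, hqim]
      have hcne : (x + y) ≠ 0 := by positivity
      have hyxne : (y - x) ≠ 0 := ne_of_gt hyx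
      have hsne : s ≠ 0 := ne_of_gt hs
      field_simp
      linear_combination (-4 * x * y) * hs2
    rw [← hcosh, arcosh_cosh dist_nonneg]
  exact le_antisymm
    (csInf_le ⟨_, fun d hd' => hlb d hd'⟩ ⟨p, hpA, q, hqB, hd⟩)
    (le_csInf ⟨_, ⟨p, hpA, q, hqB, hd⟩⟩ hlb)
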